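/- Under the hypotheses of the singular Gronwall lemma (g(t) ≤ M + L ∫_{t₀}^t (t-s)^{θ-1} g(s) ds with M, L, θ > 0), iterating n times yields constants c₁(n,θ), c₂(n,θ) > 0 such that g(t) ≤ c₁(n,θ) M (1 + L^{2ⁿ-1}(t-t₀)^{2ⁿ-1}) + c₂(n,θ) L^{2ⁿ} ∫_{t₀}^t (t-s)^{2ⁿθ - 1} g(s) ds for all t ≥ t₀. -/

import Mathlib

open MeasureTheory intervalIntegral

open MeasureTheory intervalIntegral Set Real

lemma lint_left (p a c : ℝ) (hp : 0 < p) (h : a ≤ c) :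
    ∫⁻ s in Set.Ioc a c, ENNReal.ofReal ((c - s) ^ (p-1)) ≤ ENNReal.ofReal ((c-a)^p / p) := by
  have hp' : (-1:ℝ) < p - 1 := by linarith
  have hint : IntervalIntegrable (fun s => (c - s) ^ (p-1)) volume a c := by
    have := (intervalIntegrable_rpow' hp' (a := 0) (b := c - a)).comp_sub_left c
    simpa using this.symm
  have hIoc : IntegrableOn (fun s => (c - s) ^ (p-1)) (Set.Ioc a c) volume := by
    simpa [intervalIntegrable_iff_integrableOn_Ioc_of_le h] using hint
  rw [← ofReal_integral_eq_lintegral_ofReal hIoc]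
  · apply ENNReal.ofReal_le_ofReal
    have : ∫ s in Set.Ioc a c, (c - s) ^ (p-1) = ∫ s in a..c, (c - s) ^ (p-1) := by
      rw [intervalIntegral.integral_of_le h]
    rw [this, intervalIntegral.integral_comp_sub_left (fun u => u ^ (p-1)) c]
    simp only [sub_self]
    rw [integral_rpow (Or.inl hp')]
    rw [Real.zero_rpow (by linarith : p - 1 + 1 ≠ 0)]
    simp [sub_add_cancel]
  · filter_upwards [ae_restrict_mem measurableSet_Ioc] with s hs
    exact Real.rpow_nonneg (by linarith [hs.2]) _

lemma lint_right (p a b : ℝ) (hp : 0 < p) (h : a ≤ b) :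
    ∫⁻ s in Set.Ioc a b, ENNReal.ofReal ((s - a) ^ (p-1)) ≤ ENNReal.ofReal ((b-a)^p / p) := by
  have hp' : (-1:ℝ) < p - 1 := by linarith
  have hint : IntervalIntegrable (fun s => (s - a) ^ (p-1)) volume a b := by
    have := (intervalIntegrable_rpow' hp' (a := 0) (b := b - a)).comp_sub_right a
    simpa using this
  have hIoc : IntegrableOn (fun s => (s - a) ^ (p-1)) (Set.Ioc a b) volume := by
    simpa [intervalIntegrable_iff_integrableOn_Ioc_of_le h] using hint
  rw [← ofReal_integral_eq_lintegral_ofReal hIoc]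
  · apply ENNReal.ofReal_le_ofReal
    have : ∫ s in Set.Ioc a b, (s - a) ^ (p-1) = ∫ s in a..b, (s - a) ^ (p-1) := by
      rw [intervalIntegral.integral_of_le h]
    rw [this, intervalIntegral.integral_comp_sub_right (fun u => u ^ (p-1)) a]
    simp only [sub_self]
    rw [integral_rpow (Or.inl hp')]
    rw [Real.zero_rpow (by linarith : p - 1 + 1 ≠ 0)]
    simp [sub_add_cancel]
  · filter_upwards [ae_restrict_mem measurableSet_Ioc] with s hs
    exact Real.rpow_nonneg (by linarith [hs.1]) _

open MeasureTheory intervalIntegral Set Real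

lemma half_bound (θ : ℝ) (hθ : 0 < θ) {u v : ℝ} (hv : 0 < v) (h1 : v/2 ≤ u) (h2 : u ≤ v) :
    u ^ (θ-1) ≤ max 1 (2 ^ (1-θ)) * v ^ (θ-1) := by
  rcases le_or_gt 1 θ with h | h
  · calc u^(θ-1) ≤ v^(θ-1) := Real.rpow_le_rpow (by linarith) h2 (by linarith)
    _ ≤ _ := le_mul_of_one_le_left (Real.rpow_nonneg hv.le _) (le_max_left _ _)
  · have hu : 0 < u := lt_of_lt_of_le (by linarith) h1
    calc u^(θ-1) ≤ (v/2)^(θ-1) :=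
          Real.rpow_le_rpow_of_nonpos (by linarith) h1 (by linarith)
    _ = 2^(1-θ) * v^(θ-1) := by
        rw [div_eq_mul_inv, Real.mul_rpow hv.le (by norm_num),
          Real.inv_rpow (by norm_num), ← Real.rpow_neg (by norm_num), neg_sub]
        ring
    _ ≤ _ := mul_le_mul_of_nonneg_right (le_max_right _ _) (Real.rpow_nonneg hv.le _)

lemma claimB (θ : ℝ) (hθ : 0 < θ) (r t : ℝ) (hrt : r ≤ t) :
    ∫⁻ s in Set.Icc r t, ENNReal.ofReal ((t - s) ^ (θ-1)) * ENNReal.ofReal ((s - r) ^ (θ-1))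
      ≤ ENNReal.ofReal ((2 * max 1 (2^(1-θ)) / θ) * (t - r) ^ (2*θ-1)) := by
  set C₀ : ℝ := max 1 (2^(1-θ)) with hC₀
  have hC₀pos : 0 < C₀ := lt_of_lt_of_le one_pos (le_max_left _ _)
  rcases eq_or_lt_of_le hrt with rfl | hlt
  · have h0 : volume (Set.Icc r r) = 0 := by simp
    rw [setLIntegral_measure_zero _ _ h0]
    exact zero_le
  set m := (r + t)/2 with hm
  have hrm : r < m := by rw [hm]; linarith
  have hmt : m < t := by rw [hm]; linarith
  have htr : 0 < t - r := by linarith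
  have hsub : Set.Icc r t ⊆ Set.Icc r m ∪ Set.Ioc m t := by
    intro s hs
    rcases le_or_gt s m with h | h
    · exact Or.inl ⟨hs.1, h⟩
    · exact Or.inr ⟨h, hs.2⟩
  have piece1 : ∫⁻ s in Set.Icc r m,
      ENNReal.ofReal ((t - s) ^ (θ-1)) * ENNReal.ofReal ((s - r) ^ (θ-1))
      ≤ ENNReal.ofReal (C₀ * (t-r)^(θ-1)) * ENNReal.ofReal ((t-r)^θ/θ) := by
    have step1 : ∫⁻ s in Set.Icc r m,
        ENNReal.ofReal ((t - s) ^ (θ-1)) * ENNReal.ofReal ((s - r) ^ (θ-1))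
        ≤ ∫⁻ s in Set.Icc r m,
          ENNReal.ofReal (C₀ * (t-r)^(θ-1)) * ENNReal.ofReal ((s - r) ^ (θ-1)) := by
      apply setLIntegral_mono' measurableSet_Icc
      intro s hs
      refine mul_le_mul_left (ENNReal.ofReal_le_ofReal ?_) _
      refine half_bound θ hθ htr ?_ ?_
      · have h2 : s ≤ m := hs.2
        rw [hm] at h2; linarith
      · linarith [hs.1]
    refine step1.trans ?_
    rw [lintegral_const_mul'' _ (by fun_prop)]
    refine mul_le_mul_right ?_ _
    have heq : ∫⁻ s in Set.Icc r m, ENNReal.ofReal ((s - r) ^ (θ-1))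
        = ∫⁻ s in Set.Ioc r m, ENNReal.ofReal ((s - r) ^ (θ-1)) :=
      (setLIntegral_congr Ioc_ae_eq_Icc).symm
    rw [heq]
    refine (lint_right θ r m hθ hrm.le).trans (ENNReal.ofReal_le_ofReal ?_)
    gcongr <;> linarith
  have piece2 : ∫⁻ s in Set.Ioc m t,
      ENNReal.ofReal ((t - s) ^ (θ-1)) * ENNReal.ofReal ((s - r) ^ (θ-1))
      ≤ ENNReal.ofReal (C₀ * (t-r)^(θ-1)) * ENNReal.ofReal ((t-r)^θ/θ) := by
    have step1 : ∫⁻ s in Set.Ioc m t,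
        ENNReal.ofReal ((t - s) ^ (θ-1)) * ENNReal.ofReal ((s - r) ^ (θ-1))
        ≤ ∫⁻ s in Set.Ioc m t,
          ENNReal.ofReal (C₀ * (t-r)^(θ-1)) * ENNReal.ofReal ((t - s) ^ (θ-1)) := by
      apply setLIntegral_mono' measurableSet_Ioc
      intro s hs
      rw [mul_comm (ENNReal.ofReal ((t - s) ^ (θ-1)))]
      refine mul_le_mul_left (ENNReal.ofReal_le_ofReal ?_) _
      refine half_bound θ hθ htr ?_ ?_
      · have h1 : m < s := hs.1
        rw [hm] at h1; linarith
      · linarith [hs.2]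
    refine step1.trans ?_
    rw [lintegral_const_mul'' _ (by fun_prop)]
    refine mul_le_mul_right ?_ _
    refine (lint_left θ m t hθ hmt.le).trans (ENNReal.ofReal_le_ofReal ?_)
    gcongr <;> linarith
  calc ∫⁻ s in Set.Icc r t, ENNReal.ofReal ((t - s) ^ (θ-1)) * ENNReal.ofReal ((s - r) ^ (θ-1))
      ≤ ∫⁻ s in Set.Icc r m ∪ Set.Ioc m t,
          ENNReal.ofReal ((t - s) ^ (θ-1)) * ENNReal.ofReal ((s - r) ^ (θ-1)) :=
        lintegral_mono_set hsub
    _ ≤ _ := lintegral_union_le _ _ _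
    _ ≤ ENNReal.ofReal (C₀ * (t-r)^(θ-1)) * ENNReal.ofReal ((t-r)^θ/θ)
        + ENNReal.ofReal (C₀ * (t-r)^(θ-1)) * ENNReal.ofReal ((t-r)^θ/θ) :=
        add_le_add piece1 piece2
    _ = ENNReal.ofReal ((2 * C₀ / θ) * (t - r) ^ (2*θ-1)) := by
        rw [← ENNReal.ofReal_mul (by positivity), ← two_mul, ← ENNReal.ofReal_ofNat,
          ← ENNReal.ofReal_mul (by norm_num)]
        congr 1
        have h : (t-r)^(θ-1) * (t-r)^θ = (t-r)^(2*θ-1) := by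
          rw [← Real.rpow_add htr]; ring_nf
        rw [← h]; ring

open MeasureTheory intervalIntegral Set Real
open scoped ENNReal NNReal

lemma int_eq_toReal (p t₀ t : ℝ) (h : t₀ ≤ t) (g : ℝ → ℝ) (hg : ∀ x, 0 ≤ g x)
    (hgm : Measurable g) :
    ∫ s in t₀..t, (t - s) ^ p * g s
      = (∫⁻ s in Set.Ioc t₀ t, ENNReal.ofReal ((t - s) ^ p * g s)).toReal := by
  rw [intervalIntegral.integral_of_le h]
  rw [integral_eq_lintegral_of_nonneg_ae]
  · filter_upwards [ae_restrict_mem measurableSet_Ioc] with s hs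
    exact mul_nonneg (Real.rpow_nonneg (by linarith [hs.2]) _) (hg s)
  · exact (by fun_prop : Measurable fun s => (t - s) ^ p * g s).aestronglyMeasurable

lemma onestep (θ : ℝ) (hθ : 0 < θ) :
    ∃ C₁ > 0, ∃ C₂ > 0, ∀ (M L t₀ : ℝ), 0 < M → 0 < L →
      ∀ g : ℝ → ℝ, (∀ t, 0 ≤ g t) → Measurable g →
      (∀ t, t₀ ≤ t → g t ≤ M + L * ∫ s in t₀..t, (t - s) ^ (θ - 1) * g s) →
      ∀ t, t₀ ≤ t → g t ≤ C₁ * M + C₂ * L ^ 2 * ∫ s in t₀..t, (t - s) ^ (2 * θ - 1) * g s := by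
  set C₀ : ℝ := max 1 (2^(1-θ)) with hC₀
  have hC₀pos : 0 < C₀ := lt_of_lt_of_le one_pos (le_max_left _ _)
  set K : ℝ := 2 * C₀ / θ with hK
  have hKpos : 0 < K := by positivity
  refine ⟨1 + 1/θ, by positivity, 1 + K, by positivity, ?_⟩
  intro M L t₀ hM hL g hg hgm hyp t ht
  -- notation
  set I : ℝ := ∫ s in t₀..t, (t - s) ^ (2*θ - 1) * g s with hI
  set Ilin : ℝ≥0∞ := ∫⁻ s in Set.Ioc t₀ t, ENNReal.ofReal ((t - s) ^ (2*θ-1) * g s) with hIlin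
  have hIeq : I = Ilin.toReal := int_eq_toReal (2*θ-1) t₀ t ht g hg hgm
  have hInn : 0 ≤ I := hIeq ▸ ENNReal.toReal_nonneg
  have easy : g t ≤ M → g t ≤ (1 + 1/θ) * M + (1 + K) * L^2 * I := by
    intro h
    have h1 : M ≤ (1 + 1/θ) * M := by nlinarith [one_div_pos.mpr hθ]
    nlinarith [mul_nonneg (mul_nonneg (by positivity : (0:ℝ) ≤ 1 + K)
      (by positivity : (0:ℝ) ≤ L^2)) hInn]
  rcases eq_or_lt_of_le ht with rfl | hlt
  · refine easy ?_
    have := hyp _ le_rfl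
    simpa using this
  -- t₀ < t
  set J : ℝ := ∫ s in t₀..t, (t - s) ^ (θ - 1) * g s with hJ
  set Jlin : ℝ≥0∞ := ∫⁻ s in Set.Ioc t₀ t, ENNReal.ofReal ((t - s) ^ (θ-1) * g s) with hJlin
  have hJeq : J = Jlin.toReal := int_eq_toReal (θ-1) t₀ t ht g hg hgm
  rcases eq_or_ne Jlin ⊤ with htop | hfin
  · refine easy ?_
    have h0 : J = 0 := by rw [hJeq, htop]; simp
    have := hyp t ht
    rw [← hJ, h0] at this
    simpa using this
  -- Jlin finite; show Ilin finite
  have hIlinfin : Ilin ≠ ⊤ := by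
    have hb : Ilin ≤ ENNReal.ofReal ((t - t₀)^θ) * Jlin := by
      have e1 : Ilin = ∫⁻ s in Set.Ioo t₀ t, ENNReal.ofReal ((t - s) ^ (2*θ-1) * g s) :=
        (setLIntegral_congr Ioo_ae_eq_Ioc).symm
      have e2 : Jlin = ∫⁻ s in Set.Ioo t₀ t, ENNReal.ofReal ((t - s) ^ (θ-1) * g s) :=
        (setLIntegral_congr Ioo_ae_eq_Ioc).symm
      rw [e1, e2]
      calc ∫⁻ s in Set.Ioo t₀ t, ENNReal.ofReal ((t - s) ^ (2*θ-1) * g s)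
          ≤ ∫⁻ s in Set.Ioo t₀ t,
              ENNReal.ofReal ((t - t₀)^θ) * ENNReal.ofReal ((t - s) ^ (θ-1) * g s) := by
            apply setLIntegral_mono' measurableSet_Ioo
            intro s hs
            rw [← ENNReal.ofReal_mul (Real.rpow_nonneg (by linarith : (0:ℝ) ≤ t - t₀) _)]
            apply ENNReal.ofReal_le_ofReal
            have hts : 0 < t - s := by linarith [hs.2]
            have e : (t - s)^(2*θ-1) = (t-s)^θ * (t-s)^(θ-1) := by
              rw [← Real.rpow_add hts]; ring_nf
            have h2 : (t-s)^θ ≤ (t-t₀)^θ :=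
              Real.rpow_le_rpow hts.le (by linarith [hs.1]) hθ.le
            rw [e, mul_assoc]
            exact mul_le_mul_of_nonneg_right h2
              (mul_nonneg (Real.rpow_nonneg hts.le _) (hg s))
          _ = ENNReal.ofReal ((t - t₀)^θ)
              * ∫⁻ s in Set.Ioo t₀ t, ENNReal.ofReal ((t - s) ^ (θ-1) * g s) :=
            lintegral_const_mul'' _ (by fun_prop)
    exact ne_top_of_le_ne_top (ENNReal.mul_ne_top ENNReal.ofReal_ne_top hfin) hb
  -- choose δ
  set δ : ℝ := min (t - t₀) (L ^ (-1/θ)) with hδ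
  have hδpos : 0 < δ := lt_min (by linarith) (Real.rpow_pos_of_pos hL _)
  have hδle : δ ≤ t - t₀ := min_le_left _ _
  -- far bound
  have far : ∫⁻ s in Set.Ioc t₀ (t - δ), ENNReal.ofReal ((t - s) ^ (θ-1) * g s)
      ≤ ENNReal.ofReal (δ ^ (-θ)) *
        ∫⁻ s in Set.Ioc t₀ (t - δ), ENNReal.ofReal ((t - s) ^ (2*θ-1) * g s) := by
    have step : ∀ s ∈ Set.Ioc t₀ (t - δ),
        ENNReal.ofReal ((t - s) ^ (θ-1) * g s)
          ≤ ENNReal.ofReal (δ ^ (-θ)) * ENNReal.ofReal ((t - s) ^ (2*θ-1) * g s) := by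
      intro s hs
      rw [← ENNReal.ofReal_mul (Real.rpow_nonneg hδpos.le _)]
      apply ENNReal.ofReal_le_ofReal
      have hδs : δ ≤ t - s := by linarith [hs.2]
      have hts : 0 < t - s := lt_of_lt_of_le hδpos hδs
      have key : (t-s)^(θ-1) ≤ δ^(-θ) * (t-s)^(2*θ-1) := by
        have e : (t-s)^(θ-1) = (t-s)^(-θ) * (t-s)^(2*θ-1) := by
          rw [← Real.rpow_add hts]; ring_nf
        rw [e]
        exact mul_le_mul_of_nonneg_right
          (Real.rpow_le_rpow_of_nonpos hδpos hδs (by linarith)) (Real.rpow_nonneg hts.le _)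
      calc (t-s)^(θ-1) * g s ≤ (δ^(-θ) * (t-s)^(2*θ-1)) * g s :=
            mul_le_mul_of_nonneg_right key (hg s)
        _ = δ^(-θ) * ((t-s)^(2*θ-1) * g s) := by ring
    calc ∫⁻ s in Set.Ioc t₀ (t-δ), ENNReal.ofReal ((t - s) ^ (θ-1) * g s)
        ≤ ∫⁻ s in Set.Ioc t₀ (t-δ),
            ENNReal.ofReal (δ ^ (-θ)) * ENNReal.ofReal ((t - s) ^ (2*θ-1) * g s) :=
          setLIntegral_mono' measurableSet_Ioc step
      _ = _ := lintegral_const_mul'' _ (by fun_prop)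
  -- near bound
  have near : ∫⁻ s in Set.Ioc (t - δ) t, ENNReal.ofReal ((t - s) ^ (θ-1) * g s)
      ≤ ENNReal.ofReal (M * δ^θ / θ) + ENNReal.ofReal (L * K) * Ilin := by
    set k : ℝ → ℝ≥0∞ := fun s => ENNReal.ofReal ((t - s)^(θ-1)) with hk
    have hkmeas : Measurable k := by fun_prop
    set Glin : ℝ → ℝ≥0∞ :=
      fun s => ∫⁻ r in Set.Ioc t₀ s, ENNReal.ofReal ((s - r)^(θ-1) * g r) with hGlin
    set q : ℝ × ℝ → ℝ≥0∞ := fun p =>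
      ({p : ℝ × ℝ | t₀ < p.2 ∧ p.2 ≤ p.1}.indicator
        (fun p => ENNReal.ofReal ((p.1 - p.2)^(θ-1) * g p.2))) p with hq
    have hqmeas : Measurable q :=
      (by fun_prop : Measurable fun p : ℝ×ℝ => ENNReal.ofReal ((p.1 - p.2)^(θ-1) * g p.2)).indicator
        ((measurableSet_lt measurable_const measurable_snd).inter
          (measurableSet_le measurable_snd measurable_fst))
    have hGq : ∀ s, Glin s = ∫⁻ r, q (s, r) := by
      intro s
      rw [hGlin]
      simp only
      rw [← lintegral_indicator measurableSet_Ioc]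
      congr 1
    have hGmeas : Measurable Glin := by
      have e : Glin = fun s => ∫⁻ r, q (s, r) := funext hGq
      rw [e]
      exact Measurable.lintegral_prod_right' hqmeas
    -- pointwise bound on near set
    have hpt : ∀ s ∈ Set.Ioc (t - δ) t,
        ENNReal.ofReal ((t - s) ^ (θ-1) * g s)
          ≤ k s * ENNReal.ofReal M + ENNReal.ofReal L * (k s * Glin s) := by
      intro s hs
      have hst₀ : t₀ ≤ s := le_trans (by linarith) hs.1.le
      have hG : (∫ r in t₀..s, (s - r)^(θ-1) * g r) = (Glin s).toReal :=
        int_eq_toReal (θ-1) t₀ s hst₀ g hg hgm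
      have hgs : g s ≤ M + L * (Glin s).toReal := by
        have := hyp s hst₀; rwa [hG] at this
      have h1 : ENNReal.ofReal ((t - s)^(θ-1) * g s) = k s * ENNReal.ofReal (g s) := by
        rw [hk]; exact ENNReal.ofReal_mul (Real.rpow_nonneg (by linarith [hs.2]) _)
      rw [h1]
      have h2 : ENNReal.ofReal (g s) ≤ ENNReal.ofReal M + ENNReal.ofReal L * Glin s := by
        calc ENNReal.ofReal (g s) ≤ ENNReal.ofReal (M + L * (Glin s).toReal) :=
              ENNReal.ofReal_le_ofReal hgs
          _ ≤ ENNReal.ofReal M + ENNReal.ofReal (L * (Glin s).toReal) := ENNReal.ofReal_add_le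
          _ = ENNReal.ofReal M + ENNReal.ofReal L * ENNReal.ofReal ((Glin s).toReal) := by
              rw [ENNReal.ofReal_mul hL.le]
          _ ≤ ENNReal.ofReal M + ENNReal.ofReal L * Glin s :=
              add_le_add_right (mul_le_mul_right ENNReal.ofReal_toReal_le _) _
      calc k s * ENNReal.ofReal (g s) ≤ k s * (ENNReal.ofReal M + ENNReal.ofReal L * Glin s) :=
            mul_le_mul_right h2 _
        _ = k s * ENNReal.ofReal M + ENNReal.ofReal L * (k s * Glin s) := by ring
    have hmono : ∫⁻ s in Set.Ioc (t - δ) t, ENNReal.ofReal ((t - s) ^ (θ-1) * g s)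
        ≤ (∫⁻ s in Set.Ioc (t - δ) t, k s * ENNReal.ofReal M)
          + ∫⁻ s in Set.Ioc (t - δ) t, ENNReal.ofReal L * (k s * Glin s) := by
      refine le_trans (setLIntegral_mono' measurableSet_Ioc hpt) ?_
      exact (lintegral_add_left (hkmeas.mul_const _) _).le
    -- first term
    have hterm1 : ∫⁻ s in Set.Ioc (t - δ) t, k s * ENNReal.ofReal M
        ≤ ENNReal.ofReal (M * δ^θ / θ) := by
      have e : ∀ s, k s * ENNReal.ofReal M = ENNReal.ofReal M * k s := fun s => mul_comm _ _
      calc ∫⁻ s in Set.Ioc (t - δ) t, k s * ENNReal.ofReal M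
          = ENNReal.ofReal M * ∫⁻ s in Set.Ioc (t - δ) t, k s := by
            simp only [e]
            exact lintegral_const_mul'' _ (hkmeas.aemeasurable)
        _ ≤ ENNReal.ofReal M * ENNReal.ofReal (δ^θ/θ) := by
            apply mul_le_mul_right
            have h := lint_left θ (t-δ) t hθ (by linarith)
            have e2 : t - (t - δ) = δ := by ring
            rw [e2] at h
            exact h
        _ = ENNReal.ofReal (M * δ^θ / θ) := by
            rw [← ENNReal.ofReal_mul hM.le]; ring_nf
    -- second (Fubini) term
    have hterm2 : ∫⁻ s in Set.Ioc (t - δ) t, k s * Glin s ≤ ENNReal.ofReal K * Ilin := by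
      set D : Set (ℝ × ℝ) := {p | (t - δ < p.1 ∧ p.1 ≤ t) ∧ t₀ < p.2 ∧ p.2 ≤ p.1} with hD
      have hDmeas : MeasurableSet D :=
        ((measurableSet_lt measurable_const measurable_fst).inter
          (measurableSet_le measurable_fst measurable_const)).inter
          ((measurableSet_lt measurable_const measurable_snd).inter
          (measurableSet_le measurable_snd measurable_fst))
      set F : ℝ × ℝ → ℝ≥0∞ :=
        D.indicator (fun p => k p.1 * ENNReal.ofReal ((p.1 - p.2)^(θ-1) * g p.2)) with hF
      have hFmeas : Measurable F :=
        ((hkmeas.comp measurable_fst).mul (by fun_prop)).indicator hDmeas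
      have hrow : ∀ s, (Set.Ioc (t-δ) t).indicator (fun s => k s * Glin s) s
          = ∫⁻ r, F (s, r) := by
        intro s
        by_cases hs : s ∈ Set.Ioc (t-δ) t
        · rw [Set.indicator_of_mem hs]
          have e : (fun r => F (s, r)) = fun r => k s *
              ((Set.Ioc t₀ s).indicator (fun r => ENNReal.ofReal ((s - r)^(θ-1) * g r)) r) := by
            funext r
            by_cases hr : r ∈ Set.Ioc t₀ s
            · rw [hF, Set.indicator_of_mem (show (s,r) ∈ D from ⟨⟨hs.1, hs.2⟩, hr.1, hr.2⟩),
                Set.indicator_of_mem hr]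
            · rw [hF, Set.indicator_of_notMem (show (s,r) ∉ D by
                intro hc; exact hr ⟨hc.2.1, hc.2.2⟩), Set.indicator_of_notMem hr, mul_zero]
          rw [e, lintegral_const_mul' _ _ ENNReal.ofReal_ne_top,
            lintegral_indicator measurableSet_Ioc]
        · rw [Set.indicator_of_notMem hs]
          have e : (fun r => F (s, r)) = fun _ => 0 := by
            funext r
            rw [hF, Set.indicator_of_notMem]
            intro hc; exact hs ⟨hc.1.1, hc.1.2⟩
          rw [e]; simp
      have hunc : AEMeasurable (Function.uncurry fun s r => F (s, r))
          ((volume : Measure ℝ).prod volume) :=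
        (hFmeas.comp (measurable_fst.prodMk measurable_snd)).aemeasurable
      have hswap : ∫⁻ s in Set.Ioc (t-δ) t, k s * Glin s = ∫⁻ r, ∫⁻ s, F (s, r) := by
        rw [← lintegral_indicator measurableSet_Ioc, lintegral_congr hrow]
        exact lintegral_lintegral_swap hunc
      have hcol : ∀ r, (∫⁻ s, F (s, r))
          ≤ (Set.Ioc t₀ t).indicator
            (fun r => ENNReal.ofReal K * ENNReal.ofReal ((t - r)^(2*θ-1) * g r)) r := by
        intro r
        by_cases hr : r ∈ Set.Ioc t₀ t
        · rw [Set.indicator_of_mem hr]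
          have hpt2 : ∀ s, F (s, r)
              ≤ (Set.Icc r t).indicator (fun s => k s * ENNReal.ofReal ((s - r)^(θ-1))) s
                * ENNReal.ofReal (g r) := by
            intro s
            by_cases hsr : (s, r) ∈ D
            · have hs2 : s ∈ Set.Icc r t := ⟨hsr.2.2, hsr.1.2⟩
              rw [hF, Set.indicator_of_mem hsr, Set.indicator_of_mem hs2]
              rw [ENNReal.ofReal_mul (Real.rpow_nonneg (by linarith [hsr.2.2] : (0:ℝ) ≤ s - r) _),
                mul_assoc]
            · rw [hF, Set.indicator_of_notMem hsr]; exact zero_le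
          calc (∫⁻ s, F (s, r))
              ≤ ∫⁻ s, (Set.Icc r t).indicator (fun s => k s * ENNReal.ofReal ((s - r)^(θ-1))) s
                  * ENNReal.ofReal (g r) := lintegral_mono hpt2
            _ = (∫⁻ s in Set.Icc r t, k s * ENNReal.ofReal ((s - r)^(θ-1)))
                  * ENNReal.ofReal (g r) := by
                rw [lintegral_mul_const' _ _ ENNReal.ofReal_ne_top,
                  lintegral_indicator measurableSet_Icc]
            _ ≤ ENNReal.ofReal (K * (t - r)^(2*θ-1)) * ENNReal.ofReal (g r) := by
                apply mul_le_mul_left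
                exact claimB θ hθ r t hr.2
            _ = ENNReal.ofReal K * ENNReal.ofReal ((t - r)^(2*θ-1) * g r) := by
                rw [← ENNReal.ofReal_mul (mul_nonneg hKpos.le
                  (Real.rpow_nonneg (sub_nonneg.mpr hr.2) _)), mul_assoc,
                  ENNReal.ofReal_mul hKpos.le]
        · rw [Set.indicator_of_notMem hr]
          have e : ∀ s, F (s, r) = 0 := by
            intro s; rw [hF, Set.indicator_of_notMem]
            intro hc; exact hr ⟨hc.2.1, le_trans hc.2.2 hc.1.2⟩
          simp [e]
      calc ∫⁻ s in Set.Ioc (t-δ) t, k s * Glin s = ∫⁻ r, ∫⁻ s, F (s, r) := hswap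
        _ ≤ ∫⁻ r, (Set.Ioc t₀ t).indicator
              (fun r => ENNReal.ofReal K * ENNReal.ofReal ((t - r)^(2*θ-1) * g r)) r :=
            lintegral_mono hcol
        _ = ∫⁻ r in Set.Ioc t₀ t, ENNReal.ofReal K * ENNReal.ofReal ((t - r)^(2*θ-1) * g r) :=
            lintegral_indicator measurableSet_Ioc _
        _ = ENNReal.ofReal K * Ilin :=
            lintegral_const_mul' _ _ ENNReal.ofReal_ne_top
    refine hmono.trans (add_le_add hterm1 ?_)
    calc ∫⁻ s in Set.Ioc (t - δ) t, ENNReal.ofReal L * (k s * Glin s)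
        = ENNReal.ofReal L * ∫⁻ s in Set.Ioc (t - δ) t, k s * Glin s :=
          lintegral_const_mul' _ _ ENNReal.ofReal_ne_top
      _ ≤ ENNReal.ofReal L * (ENNReal.ofReal K * Ilin) := mul_le_mul_right hterm2 _
      _ = ENNReal.ofReal (L * K) * Ilin := by rw [ENNReal.ofReal_mul hL.le, mul_assoc]
  -- split
  have hsplit : Jlin = (∫⁻ s in Set.Ioc t₀ (t - δ), ENNReal.ofReal ((t - s) ^ (θ-1) * g s))
      + ∫⁻ s in Set.Ioc (t - δ) t, ENNReal.ofReal ((t - s) ^ (θ-1) * g s) := by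
    rw [hJlin, ← lintegral_union measurableSet_Ioc (Set.Ioc_disjoint_Ioc_of_le le_rfl),
      Set.Ioc_union_Ioc_eq_Ioc (by linarith) (by linarith)]
  have hIlin_eq : Ilin = ENNReal.ofReal I := by
    rw [hIeq, ENNReal.ofReal_toReal hIlinfin]
  have hgt := hyp t ht
  rw [← hJ] at hgt
  clear_value C₀ K I Ilin J Jlin δ
  rcases le_or_gt (L ^ (-1/θ)) (t - t₀) with hcase | hcase
  · -- δ = L^(-1/θ)
    have hδe : δ = L ^ (-1/θ) := by rw [hδ]; exact min_eq_right hcase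
    have hδinv : δ ^ (-θ) = L := by
      rw [hδe, ← Real.rpow_mul hL.le, show -1/θ * -θ = 1 by field_simp, Real.rpow_one]
    have hδθ : δ ^ θ = L⁻¹ := by
      rw [hδe, ← Real.rpow_mul hL.le, show -1/θ * θ = -1 by field_simp,
        Real.rpow_neg_one]
    have hb : Jlin ≤ ENNReal.ofReal (L * I)
        + (ENNReal.ofReal (M * δ^θ / θ) + ENNReal.ofReal (L * K * I)) := by
      rw [hsplit]
      refine add_le_add (far.trans ?_) (near.trans ?_)
      · rw [hδinv]
        calc ENNReal.ofReal L * ∫⁻ s in Set.Ioc t₀ (t - δ),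
              ENNReal.ofReal ((t - s) ^ (2*θ-1) * g s)
            ≤ ENNReal.ofReal L * ∫⁻ s in Set.Ioc t₀ t,
              ENNReal.ofReal ((t - s) ^ (2*θ-1) * g s) :=
              mul_le_mul_right (lintegral_mono_set (Set.Ioc_subset_Ioc_right (by linarith))) _
          _ = ENNReal.ofReal (L * I) := by
              rw [← hIlin, hIlin_eq, ← ENNReal.ofReal_mul hL.le]
      · rw [hIlin_eq, ← ENNReal.ofReal_mul (mul_nonneg hL.le hKpos.le)]
    have hJle : J ≤ L * I + (M * δ^θ / θ + L * K * I) := by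
      rw [hJeq]
      apply ENNReal.toReal_le_of_le_ofReal
      · have : 0 ≤ M * δ^θ/θ := by positivity
        nlinarith [mul_nonneg hL.le hInn, mul_nonneg (mul_nonneg hL.le hKpos.le) hInn]
      · rw [ENNReal.ofReal_add (mul_nonneg hL.le hInn)
          (add_nonneg (by positivity) (mul_nonneg (mul_nonneg hL.le hKpos.le) hInn)),
          ENNReal.ofReal_add (by positivity) (mul_nonneg (mul_nonneg hL.le hKpos.le) hInn)]
        exact hb
    have hδθ' : M * δ^θ / θ = M / (L*θ) := by rw [hδθ]; field_simp
    rw [hδθ'] at hJle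
    have hLne : L ≠ 0 := ne_of_gt hL
    calc g t ≤ M + L * J := hgt
      _ ≤ M + L * (L * I + (M / (L*θ) + L * K * I)) :=
          add_le_add_right (mul_le_mul_of_nonneg_left hJle hL.le) M
      _ = (1 + 1/θ) * M + (1 + K) * L^2 * I := by field_simp; ring
  · -- δ = t - t₀, far part empty
    have hδe : δ = t - t₀ := by rw [hδ]; exact min_eq_left hcase.le
    have hfar0 : (∫⁻ s in Set.Ioc t₀ (t - δ), ENNReal.ofReal ((t - s) ^ (θ-1) * g s)) = 0 := by
      have e : t - δ = t₀ := by rw [hδe]; ring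
      rw [e]
      simp
    have hb : Jlin ≤ ENNReal.ofReal (M * δ^θ / θ) + ENNReal.ofReal (L * K * I) := by
      rw [hsplit, hfar0, zero_add]
      refine near.trans ?_
      rw [hIlin_eq, ← ENNReal.ofReal_mul (mul_nonneg hL.le hKpos.le)]
    have hJle : J ≤ M * δ^θ / θ + L * K * I := by
      rw [hJeq]
      apply ENNReal.toReal_le_of_le_ofReal
      · have : 0 ≤ M * δ^θ/θ := by positivity
        nlinarith [mul_nonneg (mul_nonneg hL.le hKpos.le) hInn]
      · rw [ENNReal.ofReal_add (by positivity) (mul_nonneg (mul_nonneg hL.le hKpos.le) hInn)]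
        exact hb
    have hδθle : δ ^ θ ≤ L⁻¹ := by
      have hd2 : δ ≤ L ^ (-1/θ) := by rw [hδ]; exact min_le_right _ _
      have h1 : δ ^ θ ≤ (L ^ (-1/θ)) ^ θ :=
        Real.rpow_le_rpow hδpos.le hd2 hθ.le
      calc δ ^ θ ≤ (L ^ (-1/θ)) ^ θ := h1
        _ = L⁻¹ := by
          rw [← Real.rpow_mul hL.le, show -1/θ * θ = -1 by field_simp, Real.rpow_neg_one]
    have hLδ : L * δ^θ ≤ 1 := by
      calc L * δ^θ ≤ L * L⁻¹ := mul_le_mul_of_nonneg_left hδθle hL.le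
        _ = 1 := mul_inv_cancel₀ (ne_of_gt hL)
    calc g t ≤ M + L * J := hgt
      _ ≤ M + L * (M * δ^θ / θ + L * K * I) :=
          add_le_add_right (mul_le_mul_of_nonneg_left hJle hL.le) M
      _ = M + (L * δ^θ) * (M / θ) + K * L^2 * I := by ring
      _ ≤ (1 + 1/θ) * M + (1 + K) * L^2 * I := by
          have h1 : (L * δ^θ) * (M / θ) ≤ 1 * (M / θ) :=
            mul_le_mul_of_nonneg_right hLδ (by positivity)
          have h2 : (0:ℝ) ≤ L^2 * I := mul_nonneg (pow_nonneg hL.le 2) hInn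
          have h3 : (1 + 1/θ) * M = M + M / θ := by ring
          have h4 : (1 + K) * L^2 * I = K * L^2 * I + L^2 * I := by ring
          linarith [h1]

lemma iterstep (θ : ℝ) (hθ : 0 < θ) (n : ℕ) :
    ∃ C₁ > 0, ∃ C₂ > 0, ∀ (M L t₀ : ℝ), 0 < M → 0 < L →
      ∀ g : ℝ → ℝ, (∀ t, 0 ≤ g t) → Measurable g →
      (∀ t, t₀ ≤ t → g t ≤ M + L * ∫ s in t₀..t, (t - s) ^ (θ - 1) * g s) →
      ∀ t, t₀ ≤ t → g t ≤ C₁ * M + C₂ * L ^ (2^n) *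
        ∫ s in t₀..t, (t - s) ^ ((2:ℝ)^n * θ - 1) * g s := by
  induction n with
  | zero =>
    refine ⟨1, one_pos, 1, one_pos, ?_⟩
    intro M L t₀ hM hL g hg hgm hyp t ht
    have := hyp t ht
    simpa using this
  | succ n ih =>
    obtain ⟨C₁, hC₁, C₂, hC₂, H⟩ := ih
    obtain ⟨D₁, hD₁, D₂, hD₂, H2⟩ := onestep ((2:ℝ)^n * θ) (by positivity)
    refine ⟨D₁ * C₁, by positivity, D₂ * C₂^2, by positivity, ?_⟩
    intro M L t₀ hM hL g hg hgm hyp t ht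
    have key := H2 (C₁ * M) (C₂ * L ^ (2^n)) t₀ (by positivity) (by positivity) g hg hgm
      (fun u hu => H M L t₀ hM hL g hg hgm hyp u hu) t ht
    have e1 : 2 * ((2:ℝ)^n * θ) - 1 = (2:ℝ)^(n+1) * θ - 1 := by ring
    have e2 : (C₂ * L ^ (2^n))^2 = C₂^2 * L^(2^(n+1)) := by
      rw [mul_pow, ← pow_mul, pow_succ 2 n]
    rw [e1, e2] at key
    calc g t ≤ _ := key
      _ = D₁ * C₁ * M + D₂ * C₂^2 * L^(2^(n+1))
          * ∫ s in t₀..t, (t - s) ^ ((2:ℝ)^(n+1) * θ - 1) * g s := by ring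

/-- Iterated singular Gronwall lemma: iterating the one-step estimate `n` times
yields constants `c₁(n,θ), c₂(n,θ) > 0` such that
`g(t) ≤ c₁ M (1 + L^{2ⁿ-1}(t-t₀)^{2ⁿ-1}) + c₂ L^{2ⁿ} ∫_{t₀}^t (t-s)^{2ⁿθ-1} g(s) ds`. -/
theorem stmt2 (θ : ℝ) (hθ : 0 < θ) (n : ℕ) :
    ∃ c₁ > 0, ∃ c₂ > 0, ∀ (M L t₀ : ℝ), 0 < M → 0 < L →
      ∀ g : ℝ → ℝ, (∀ t, 0 ≤ g t) → Measurable g → LocallyIntegrable g →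
      (∀ t, t₀ ≤ t → g t ≤ M + L * ∫ s in t₀..t, (t - s) ^ (θ - 1) * g s) →
      ∀ t, t₀ ≤ t →
        g t ≤ c₁ * M * (1 + L ^ (2 ^ n - 1) * (t - t₀) ^ ((2:ℝ) ^ n - 1)) +
          c₂ * L ^ (2 ^ n) * ∫ s in t₀..t, (t - s) ^ ((2:ℝ) ^ n * θ - 1) * g s := by
  obtain ⟨C₁, hC₁, C₂, hC₂, H⟩ := iterstep θ hθ n
  refine ⟨C₁, hC₁, C₂, hC₂, ?_⟩
  intro M L t₀ hM hL g hg hgm _hloc hyp t ht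
  have h := H M L t₀ hM hL g hg hgm hyp t ht
  have hpoly : (0:ℝ) ≤ L ^ (2^n - 1) * (t - t₀) ^ ((2:ℝ)^n - 1) :=
    mul_nonneg (pow_nonneg hL.le _) (Real.rpow_nonneg (by linarith) _)
  have h2 : C₁ * M ≤ C₁ * M * (1 + L ^ (2^n - 1) * (t - t₀) ^ ((2:ℝ)^n - 1)) := by
    nlinarith [mul_pos hC₁ hM]
  linarith
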